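/- Let R be an integral domain of characteristic zero and 𝔲 a set of derivations of R, with filtration G_i = {x ∈ R : every composite D_{i+1} ∘ ⋯ ∘ D_1 of i+1 derivations from 𝔲 annihilates x} for i ≥ 0; assume that every element of R lies in some G_i, and for x ≠ 0 let ι(x) = min{i ≥ 0 : x ∈ G_i}. Let K be the fraction field of R. Then the function v on K∖{0} defined by v(x/y) = ι(y) − ι(x) for nonzero x, y ∈ R is well-defined and is an additive valuation: v(f·g) = v(f) + v(g) for all nonzero f, g ∈ K, and v(f + g) ≥ min(v(f), v(g)) whenever f, g, f+g are nonzero. Moreover, if k ⊆ R is a subfield annihilated by every derivation in 𝔲, then v(c) = 0 for every nonzero c ∈ k. -/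

import Mathlib

/-- Apply a list of operators to an element, the head of the list being applied first. -/
def iterApp {R : Type*} : List (R → R) → R → R
  | [], x => x
  | D :: Ds, x => iterApp Ds (D x)

/-- A derivation of a commutative ring: an additive map satisfying the Leibniz rule. -/
def IsDerivation {R : Type*} [CommRing R] (D : R → R) : Prop :=
  (∀ a b : R, D (a + b) = D a + D b) ∧ (∀ a b : R, D (a * b) = D a * b + a * D b)

/-- For `i ≥ 0`, the `i`-th Socle piece: elements annihilated by every composite of
`i + 1` derivations from `u`. -/
def SocleGNat {R : Type*} [CommRing R] (u : Set (R → R)) (i : ℕ) : Set R :=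
  {x | ∀ Ds : List (R → R), (∀ D ∈ Ds, D ∈ u) → Ds.length = i + 1 → iterApp Ds x = 0}

/-- `iota u x` is the least `i ≥ 0` with `x ∈ G i`. -/
noncomputable def iota {R : Type*} [CommRing R] (u : Set (R → R)) (x : R) : ℕ :=
  sInf {i : ℕ | x ∈ SocleGNat u i}



namespace SVaux

variable {β : Type*}

def pickT : List Bool → List β → List β
  | true :: σ, a :: l => a :: pickT σ l
  | false :: σ, _ :: l => pickT σ l
  | _, _ => []

def pickF : List Bool → List β → List β
  | true :: σ, _ :: l => pickF σ l
  | false :: σ, a :: l => a :: pickF σ l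
  | _, _ => []

def itl : List Bool → List β → List β → List β
  | true :: σ, a :: p, q => a :: itl σ p q
  | false :: σ, p, b :: q => b :: itl σ p q
  | _, _, _ => []

def masks : ℕ → Finset (List Bool)
  | 0 => {[]}
  | n+1 => ((masks n).image (List.cons true)) ∪ ((masks n).image (List.cons false))

lemma mem_masks {σ : List Bool} {n : ℕ} : σ ∈ masks n ↔ σ.length = n := by
  induction n generalizing σ with
  | zero => simp [masks, List.length_eq_zero_iff]
  | succ n ih =>
    cases σ with
    | nil => simp [masks]
    | cons b σ => cases b <;> simp [masks, ih]

lemma mem_pickT {σ : List Bool} {l : List β} {a : β} (h : a ∈ pickT σ l) : a ∈ l := by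
  induction σ generalizing l with
  | nil => simp [pickT] at h
  | cons b σ ih =>
    cases l with
    | nil => cases b <;> simp [pickT] at h
    | cons x l =>
      cases b with
      | true =>
        simp only [pickT, List.mem_cons] at h ⊢
        rcases h with h | h
        · exact Or.inl h
        · exact Or.inr (ih h)
      | false => exact List.mem_cons_of_mem _ (ih h)

lemma mem_pickF {σ : List Bool} {l : List β} {a : β} (h : a ∈ pickF σ l) : a ∈ l := by
  induction σ generalizing l with
  | nil => simp [pickF] at h
  | cons b σ ih =>
    cases l with
    | nil => cases b <;> simp [pickF] at h
    | cons x l =>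
      cases b with
      | false =>
        simp only [pickF, List.mem_cons] at h ⊢
        rcases h with h | h
        · exact Or.inl h
        · exact Or.inr (ih h)
      | true => exact List.mem_cons_of_mem _ (ih h)

lemma length_pickT {σ : List Bool} {l : List β} (h : σ.length = l.length) :
    (pickT σ l).length = σ.count true := by
  induction σ generalizing l with
  | nil => simp [pickT]
  | cons b σ ih =>
    cases l with
    | nil => simp at h
    | cons x l =>
      have h' : σ.length = l.length := by simpa using h
      cases b <;> simp [pickT, ih h', List.count_cons]

lemma length_pickF {σ : List Bool} {l : List β} (h : σ.length = l.length) :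
    (pickF σ l).length = σ.count false := by
  induction σ generalizing l with
  | nil => simp [pickF]
  | cons b σ ih =>
    cases l with
    | nil => simp at h
    | cons x l =>
      have h' : σ.length = l.length := by simpa using h
      cases b <;> simp [pickF, ih h', List.count_cons]

lemma count_true_add_count_false (σ : List Bool) :
    σ.count true + σ.count false = σ.length := by
  induction σ with
  | nil => simp
  | cons b σ ih => cases b <;> simp [List.count_cons] <;> omega

lemma itl_pick {σ : List Bool} {l : List β} (h : σ.length = l.length) :
    itl σ (pickT σ l) (pickF σ l) = l := by
  induction σ generalizing l with
  | nil =>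
    have : l = [] := by simpa using (List.length_eq_zero_iff.1 h.symm)
    simp [this, itl]
  | cons b σ ih =>
    cases l with
    | nil => simp at h
    | cons x l =>
      have h' : σ.length = l.length := by simpa using h
      cases b with
      | true => simp [pickT, pickF, itl, ih h']
      | false => simp [pickT, pickF, itl, ih h']

lemma pickT_itl {σ : List Bool} {p q : List β} (hp : σ.count true = p.length)
    (hq : σ.count false = q.length) : pickT σ (itl σ p q) = p := by
  induction σ generalizing p q with
  | nil =>
    have : p = [] := List.length_eq_zero_iff.1 (by simpa using hp.symm)
    simp [this, itl, pickT]
  | cons b σ ih =>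
    cases b with
    | true =>
      cases p with
      | nil => simp [List.count_cons] at hp
      | cons a p =>
        have hp' : σ.count true = p.length := by simp [List.count_cons] at hp; omega
        simp [itl, pickT, ih hp' (by simpa [List.count_cons] using hq)]
    | false =>
      cases q with
      | nil => simp [List.count_cons] at hq
      | cons b' q =>
        have hq' : σ.count false = q.length := by simp [List.count_cons] at hq; omega
        simp [itl, pickT, ih (by simpa [List.count_cons] using hp) hq']

lemma pickF_itl {σ : List Bool} {p q : List β} (hp : σ.count true = p.length)
    (hq : σ.count false = q.length) : pickF σ (itl σ p q) = q := by
  induction σ generalizing p q with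
  | nil =>
    have : q = [] := List.length_eq_zero_iff.1 (by simpa using hq.symm)
    simp [this, itl, pickF]
  | cons b σ ih =>
    cases b with
    | true =>
      cases p with
      | nil => simp [List.count_cons] at hp
      | cons a p =>
        have hp' : σ.count true = p.length := by simp [List.count_cons] at hp; omega
        simp [itl, pickF, ih hp' (by simpa [List.count_cons] using hq)]
    | false =>
      cases q with
      | nil => simp [List.count_cons] at hq
      | cons b' q =>
        have hq' : σ.count false = q.length := by simp [List.count_cons] at hq; omega
        simp [itl, pickF, ih (by simpa [List.count_cons] using hp) hq']

lemma length_itl {σ : List Bool} {p q : List β} (hp : σ.count true = p.length)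
    (hq : σ.count false = q.length) : (itl σ p q).length = σ.length := by
  induction σ generalizing p q with
  | nil => simp [itl]
  | cons b σ ih =>
    cases b with
    | true =>
      cases p with
      | nil => simp [List.count_cons] at hp
      | cons a p =>
        have hp' : σ.count true = p.length := by simp [List.count_cons] at hp; omega
        simp [itl, ih hp' (by simpa [List.count_cons] using hq)]
    | false =>
      cases q with
      | nil => simp [List.count_cons] at hq
      | cons b' q =>
        have hq' : σ.count false = q.length := by simp [List.count_cons] at hq; omega
        simp [itl, ih (by simpa [List.count_cons] using hp) hq']

lemma mem_itl {σ : List Bool} {p q : List β} {a : β} (h : a ∈ itl σ p q) :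
    a ∈ p ∨ a ∈ q := by
  induction σ generalizing p q with
  | nil => simp [itl] at h
  | cons b σ ih =>
    cases b with
    | true =>
      cases p with
      | nil => simp [itl] at h
      | cons x p =>
        simp only [itl, List.mem_cons] at h
        rcases h with h | h
        · exact Or.inl (by simp [h])
        · rcases ih h with h | h
          · exact Or.inl (List.mem_cons_of_mem _ h)
          · exact Or.inr h
    | false =>
      cases q with
      | nil => simp [itl] at h
      | cons y q =>
        simp only [itl, List.mem_cons] at h
        rcases h with h | h
        · exact Or.inr (by simp [h])
        · rcases ih h with h | h
          · exact Or.inl h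
          · exact Or.inr (List.mem_cons_of_mem _ h)


end SVaux

namespace SVaux2
variable {β : Type*} [LinearOrder β]
lemma list_lt_iff_lex {p c : List β} : p < c ↔ List.Lex (· < ·) p c := Iff.rfl

lemma cons_lt_cons_iff' {a e : β} {p c : List β} :
    (a :: p) < (e :: c) ↔ a < e ∨ (a = e ∧ p < c) := by
  rw [list_lt_iff_lex]
  constructor
  · intro h
    cases h with
    | rel h => exact Or.inl h
    | cons h => exact Or.inr ⟨rfl, h⟩
  · rintro (h | ⟨rfl, h⟩)
    · exact List.Lex.rel h
    · exact List.Lex.cons h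

lemma cons_le_cons' {a : β} {p c : List β} (h : p ≤ c) : (a :: p) ≤ (a :: c) := by
  rcases lt_or_eq_of_le h with h | rfl
  · exact le_of_lt (cons_lt_cons_iff'.2 (Or.inr ⟨rfl, h⟩))
  · exact le_refl _

open SVaux

lemma itl_le_itl : ∀ (σ : List Bool) (p c q d : List β),
    σ.count true = p.length → σ.count true = c.length →
    σ.count false = q.length → σ.count false = d.length →
    p ≤ c → q ≤ d → itl σ p q ≤ itl σ c d := by
  intro σ
  induction σ with
  | nil =>
    intro p c q d hp hc hq hd _ _
    have hp0 : p = [] := List.length_eq_zero_iff.1 (by simpa using hp.symm)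
    have hc0 : c = [] := List.length_eq_zero_iff.1 (by simpa using hc.symm)
    subst hp0; subst hc0
    exact le_refl _
  | cons b σ ih =>
    intro p c q d hp hc hq hd hpc hqd
    cases b with
    | true =>
      cases p with
      | nil => simp [List.count_cons] at hp
      | cons a p' =>
        cases c with
        | nil => simp [List.count_cons] at hc
        | cons e c' =>
          have hp' : σ.count true = p'.length := by simp [List.count_cons] at hp; omega
          have hc' : σ.count true = c'.length := by simp [List.count_cons] at hc; omega
          have hq' : σ.count false = q.length := by simpa [List.count_cons] using hq
          have hd' : σ.count false = d.length := by simpa [List.count_cons] using hd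
          show (a :: itl σ p' q : List β) ≤ (e :: itl σ c' d)
          rcases lt_or_eq_of_le hpc with hlt | heq
          · rcases cons_lt_cons_iff'.1 hlt with h1 | ⟨rfl, h2⟩
            · exact le_of_lt (cons_lt_cons_iff'.2 (Or.inl h1))
            · exact cons_le_cons' (ih p' c' q d hp' hc' hq' hd' (le_of_lt h2) hqd)
          · obtain ⟨rfl, rfl⟩ := List.cons.inj heq
            exact cons_le_cons' (ih _ _ _ _ hp' hc' hq' hd' (le_refl _) hqd)
    | false =>
      cases q with
      | nil => simp [List.count_cons] at hq
      | cons a q' =>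
        cases d with
        | nil => simp [List.count_cons] at hd
        | cons e d' =>
          have hq' : σ.count false = q'.length := by simp [List.count_cons] at hq; omega
          have hd' : σ.count false = d'.length := by simp [List.count_cons] at hd; omega
          have hp' : σ.count true = p.length := by simpa [List.count_cons] using hp
          have hc' : σ.count true = c.length := by simpa [List.count_cons] using hc
          show (a :: itl σ p q' : List β) ≤ (e :: itl σ c d')
          rcases lt_or_eq_of_le hqd with hlt | heq
          · rcases cons_lt_cons_iff'.1 hlt with h1 | ⟨rfl, h2⟩
            · exact le_of_lt (cons_lt_cons_iff'.2 (Or.inl h1))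
            · exact cons_le_cons' (ih p c q' d' hp' hc' hq' hd' hpc (le_of_lt h2))
          · obtain ⟨rfl, rfl⟩ := List.cons.inj heq
            exact cons_le_cons' (ih _ _ _ _ hp' hc' hq' hd' hpc (le_refl _))

end SVaux2

namespace SVaux
/-- Words of a given length with letters in a finite set form a finite set. -/
lemma finite_words {β : Type*} (L : List β) :
    ∀ k : ℕ, {l : List β | l.length = k ∧ ∀ a ∈ l, a ∈ L}.Finite := by
  intro k
  induction k with
  | zero =>
    apply Set.Finite.subset (Set.finite_singleton ([] : List β))
    rintro l ⟨hl, -⟩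
    simp [List.length_eq_zero_iff.1 hl]
  | succ k ih =>
    apply Set.Finite.subset (Set.Finite.image2 List.cons (L.finite_toSet) ih)
    rintro l ⟨hl, hmem⟩
    cases l with
    | nil => simp at hl
    | cons a l' =>
      exact Set.mem_image2_of_mem (hmem a (by simp))
        ⟨by simpa using hl, fun b hb => hmem b (List.mem_cons_of_mem _ hb)⟩
end SVaux
namespace SVaux3
open SVaux

variable {R : Type*} [CommRing R]

lemma iterApp_append (l₁ l₂ : List (R → R)) (x : R) :
    iterApp (l₁ ++ l₂) x = iterApp l₂ (iterApp l₁ x) := by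
  induction l₁ generalizing x with
  | nil => rfl
  | cons D l ih => simp [iterApp, ih]

lemma iterApp_add (Ds : List (R → R)) (h : ∀ D ∈ Ds, ∀ a b : R, D (a + b) = D a + D b)
    (a b : R) : iterApp Ds (a + b) = iterApp Ds a + iterApp Ds b := by
  induction Ds generalizing a b with
  | nil => rfl
  | cons D l ih =>
    show iterApp l (D (a + b)) = iterApp l (D a) + iterApp l (D b)
    rw [h D (List.mem_cons_self) a b]
    exact ih (fun E hE => h E (List.mem_cons_of_mem _ hE)) _ _

lemma iterApp_zero (Ds : List (R → R)) (h : ∀ D ∈ Ds, ∀ a b : R, D (a + b) = D a + D b) :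
    iterApp Ds (0 : R) = 0 := by
  induction Ds with
  | nil => rfl
  | cons D l ih =>
    have hD : D 0 = 0 := by
      have := h D (List.mem_cons_self) 0 0
      simpa using this.symm
    show iterApp l (D 0) = 0
    rw [hD]
    exact ih (fun E hE => h E (List.mem_cons_of_mem _ hE))

lemma iterApp_mul (Ds : List (R → R)) (h : ∀ D ∈ Ds, IsDerivation D) (x y : R) :
    iterApp Ds (x * y) =
      ∑ σ ∈ masks Ds.length, iterApp (pickT σ Ds) x * iterApp (pickF σ Ds) y := by
  induction Ds generalizing x y with
  | nil => simp [masks, iterApp, pickT, pickF]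
  | cons D Ds ih =>
    have hD := h D (List.mem_cons_self)
    have hDs : ∀ E ∈ Ds, IsDerivation E := fun E hE => h E (List.mem_cons_of_mem _ hE)
    have hadd : ∀ E ∈ Ds, ∀ a b : R, E (a + b) = E a + E b := fun E hE => (hDs E hE).1
    show iterApp Ds (D (x * y)) = _
    rw [hD.2 x y, iterApp_add Ds hadd, ih hDs, ih hDs]
    have hdisj : Disjoint ((masks Ds.length).image (List.cons true))
        ((masks Ds.length).image (List.cons false)) := by
      rw [Finset.disjoint_left]
      rintro σ h1 h2
      obtain ⟨a, -, rfl⟩ := Finset.mem_image.1 h1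
      obtain ⟨b, -, hb⟩ := Finset.mem_image.1 h2
      exact (Bool.false_ne_true (by injection hb))
    have hinjT : Set.InjOn (List.cons true) (masks Ds.length) :=
      fun a _ b _ hab => by injection hab
    have hinjF : Set.InjOn (List.cons false) (masks Ds.length) :=
      fun a _ b _ hab => by injection hab
    show _ = ∑ σ ∈ ((masks Ds.length).image (List.cons true)) ∪
        ((masks Ds.length).image (List.cons false)),
        iterApp (pickT σ (D :: Ds)) x * iterApp (pickF σ (D :: Ds)) y
    rw [Finset.sum_union hdisj, Finset.sum_image hinjT, Finset.sum_image hinjF]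
    refine congrArg₂ (· + ·) (Finset.sum_congr rfl fun σ _ => ?_)
      (Finset.sum_congr rfl fun σ _ => ?_) <;> simp [pickT, pickF, iterApp]

end SVaux3

namespace SVaux4
open SVaux SVaux3

variable {R : Type*} [CommRing R] [IsDomain R] [CharZero R]
variable {u : Set (R → R)}

lemma hadd_of_mem (hu : ∀ D ∈ u, IsDerivation D) {w : List (R → R)}
    (hw : ∀ D ∈ w, D ∈ u) : ∀ D ∈ w, ∀ a b : R, D (a + b) = D a + D b :=
  fun D hD => (hu D (hw D hD)).1

lemma kill (hu : ∀ D ∈ u, IsDerivation D) {i : ℕ} {x : R} (hx : x ∈ SocleGNat u i)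
    {w : List (R → R)} (hw : ∀ D ∈ w, D ∈ u) (hlen : i + 1 ≤ w.length) :
    iterApp w x = 0 := by
  have h1 : iterApp (w.take (i+1)) x = 0 := by
    apply hx
    · exact fun D hD => hw D (List.take_subset _ _ hD)
    · rw [List.length_take]; omega
  calc iterApp w x = iterApp (w.take (i+1) ++ w.drop (i+1)) x := by
        rw [List.take_append_drop]
    _ = iterApp (w.drop (i+1)) (iterApp (w.take (i+1)) x) := iterApp_append _ _ _
    _ = iterApp (w.drop (i+1)) 0 := by rw [h1]
    _ = 0 := iterApp_zero _ (hadd_of_mem hu (fun D hD => hw D (List.drop_subset _ _ hD)))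

lemma socle_mono (hu : ∀ D ∈ u, IsDerivation D) {i j : ℕ} (hij : i ≤ j) :
    SocleGNat u i ⊆ SocleGNat u j := by
  intro x hx Ds hDs hlen
  exact kill hu hx hDs (by omega)

lemma socle_add (hu : ∀ D ∈ u, IsDerivation D) {i : ℕ} {x y : R}
    (hx : x ∈ SocleGNat u i) (hy : y ∈ SocleGNat u i) : x + y ∈ SocleGNat u i := by
  intro Ds hDs hlen
  rw [iterApp_add Ds (hadd_of_mem hu hDs), hx Ds hDs hlen, hy Ds hDs hlen, add_zero]

lemma mem_socle_iota (hexh : ∀ x : R, ∃ i : ℕ, x ∈ SocleGNat u i) (x : R) :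
    x ∈ SocleGNat u (iota u x) :=
  Nat.sInf_mem (hexh x)

lemma iota_le {x : R} {i : ℕ} (h : x ∈ SocleGNat u i) : iota u x ≤ i :=
  Nat.sInf_le h

lemma exists_word {x : R} (hx : x ≠ 0) :
    ∃ w : List (R → R), (∀ D ∈ w, D ∈ u) ∧ w.length = iota u x ∧ iterApp w x ≠ 0 := by
  rcases Nat.eq_zero_or_pos (iota u x) with h0 | hpos
  · exact ⟨[], by simp, by simp [h0, iterApp], by simpa [iterApp] using hx⟩
  · have hlt : iota u x - 1 < iota u x := by omega
    have hnot : x ∉ SocleGNat u (iota u x - 1) := Nat.notMem_of_lt_sInf hlt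
    simp only [SocleGNat, Set.mem_setOf_eq, not_forall] at hnot
    obtain ⟨w, hw1, hw2, hw3⟩ := hnot
    exact ⟨w, hw1, by omega, hw3⟩

lemma iota_add_le (hu : ∀ D ∈ u, IsDerivation D)
    (hexh : ∀ x : R, ∃ i : ℕ, x ∈ SocleGNat u i) (x y : R) :
    iota u (x + y) ≤ max (iota u x) (iota u y) :=
  iota_le (socle_add hu
    (socle_mono hu (le_max_left _ _) (mem_socle_iota hexh x))
    (socle_mono hu (le_max_right _ _) (mem_socle_iota hexh y)))

end SVaux4

namespace SVaux4
open SVaux SVaux3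

variable {R : Type*} [CommRing R] [IsDomain R] [CharZero R]
variable {u : Set (R → R)}

lemma iota_mul (hu : ∀ D ∈ u, IsDerivation D)
    (hexh : ∀ x : R, ∃ i : ℕ, x ∈ SocleGNat u i)
    {x y : R} (hx : x ≠ 0) (hy : y ≠ 0) :
    iota u (x * y) = iota u x + iota u y := by
  classical
  set m := iota u x with hm
  set n := iota u y with hn
  have hle : x * y ∈ SocleGNat u (m + n) := by
    intro Ds hDs hlen
    rw [iterApp_mul Ds (fun D hD => hu D (hDs D hD)) x y]
    apply Finset.sum_eq_zero
    intro σ hσ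
    have hσl : σ.length = Ds.length := mem_masks.1 hσ
    have hl1 : (pickT σ Ds).length = σ.count true := length_pickT hσl
    have hl2 : (pickF σ Ds).length = σ.count false := length_pickF hσl
    have hcc := count_true_add_count_false σ
    rcases le_or_gt (m + 1) (pickT σ Ds).length with h | h
    · rw [kill hu (mem_socle_iota hexh x) (fun D hD => hDs D (mem_pickT hD)) h, zero_mul]
    · have h2 : n + 1 ≤ (pickF σ Ds).length := by omega
      rw [kill hu (mem_socle_iota hexh y) (fun D hD => hDs D (mem_pickF hD)) h2, mul_zero]
  refine le_antisymm (iota_le hle) (not_lt.1 ?_)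
  intro hlt
  obtain ⟨A, hAu, hAl, hAx⟩ := exists_word (u := u) hx
  obtain ⟨B, hBu, hBl, hBy⟩ := exists_word (u := u) hy
  letI : LinearOrder (R → R) := IsWellOrder.linearOrder WellOrderingRel
  set L0 : List (R → R) := A ++ B with hL0
  have hL0u : ∀ D ∈ L0, D ∈ u := by
    intro D hD
    rcases List.mem_append.1 hD with h | h
    exacts [hAu D h, hBu D h]
  have hSx : {l : List (R → R) | (l.length = m ∧ ∀ a ∈ l, a ∈ L0) ∧ iterApp l x ≠ 0}.Finite :=
    (finite_words L0 m).subset (fun l hl => hl.1)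
  have hSy : {l : List (R → R) | (l.length = n ∧ ∀ a ∈ l, a ∈ L0) ∧ iterApp l y ≠ 0}.Finite :=
    (finite_words L0 n).subset (fun l hl => hl.1)
  have hAS : A ∈ hSx.toFinset := by
    rw [Set.Finite.mem_toFinset]
    exact ⟨⟨hAl.trans hm.symm, fun a ha => List.mem_append_left _ ha⟩, hAx⟩
  have hBS : B ∈ hSy.toFinset := by
    rw [Set.Finite.mem_toFinset]
    exact ⟨⟨hBl.trans hn.symm, fun a ha => List.mem_append_right _ ha⟩, hBy⟩
  obtain ⟨c, hcS, hcmax⟩ := Finset.exists_max_image hSx.toFinset id ⟨A, hAS⟩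
  obtain ⟨d, hdS, hdmax⟩ := Finset.exists_max_image hSy.toFinset id ⟨B, hBS⟩
  rw [Set.Finite.mem_toFinset] at hcS hdS
  obtain ⟨⟨hcl, hcL0⟩, hcx⟩ := hcS
  obtain ⟨⟨hdl, hdL0⟩, hdy⟩ := hdS
  set MS : Finset (List Bool) := (masks (m + n)).filter (fun σ => σ.count true = m) with hMS
  have hMSne : MS.Nonempty := by
    refine ⟨List.replicate m true ++ List.replicate n false, ?_⟩
    rw [hMS, Finset.mem_filter]
    constructor
    · exact mem_masks.2 (by simp)
    · simp [List.count_append, List.count_replicate]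
  obtain ⟨σs, hσsMS, hσsmax⟩ := Finset.exists_max_image MS (fun σ => itl σ c d) hMSne
  rw [hMS, Finset.mem_filter] at hσsMS
  obtain ⟨hσs1, hσs2⟩ := hσsMS
  have hσsl : σs.length = m + n := mem_masks.1 hσs1
  have hσsf : σs.count false = n := by
    have := count_true_add_count_false σs; omega
  set M : List (R → R) := itl σs c d with hM
  have hMlen : M.length = m + n := by
    rw [hM, length_itl (by rw [hσs2, hcl]) (by rw [hσsf, hdl])]
    exact hσsl
  have hML0 : ∀ D ∈ M, D ∈ L0 := by
    intro D hD
    rcases mem_itl (hM ▸ hD) with h | h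
    exacts [hcL0 D h, hdL0 D h]
  have hMu : ∀ D ∈ M, D ∈ u := fun D hD => hL0u D (hML0 D hD)
  have hkill : iterApp M (x * y) = 0 :=
    kill hu (mem_socle_iota hexh (x * y)) hMu (by omega)
  rw [iterApp_mul M (fun D hD => hu D (hMu D hD)) x y, hMlen] at hkill
  have heval : ∀ σ ∈ masks (m + n),
      iterApp (pickT σ M) x * iterApp (pickF σ M) y =
      if pickT σ M = c ∧ pickF σ M = d then iterApp c x * iterApp d y else 0 := by
    intro σ hσ
    have hσl : σ.length = m + n := mem_masks.1 hσ
    by_cases hcase : pickT σ M = c ∧ pickF σ M = d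
    · rw [if_pos hcase, hcase.1, hcase.2]
    · rw [if_neg hcase]
      by_cases hp0 : iterApp (pickT σ M) x = 0
      · rw [hp0, zero_mul]
      by_cases hq0 : iterApp (pickF σ M) y = 0
      · rw [hq0, mul_zero]
      exfalso
      have hσM : σ.length = M.length := by omega
      have hpl' : (pickT σ M).length = σ.count true := length_pickT hσM
      have hql' : (pickF σ M).length = σ.count false := length_pickF hσM
      have hcc := count_true_add_count_false σ
      have hplm : (pickT σ M).length = m := by
        by_contra hne
        rcases lt_or_gt_of_ne hne with h | h
        · have h2 : n + 1 ≤ (pickF σ M).length := by omega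
          exact hq0 (kill hu (mem_socle_iota hexh y) (fun D hD => hMu D (mem_pickF hD)) h2)
        · exact hp0 (kill hu (mem_socle_iota hexh x) (fun D hD => hMu D (mem_pickT hD)) h)
      have hqln : (pickF σ M).length = n := by omega
      have hpS : pickT σ M ∈ hSx.toFinset := by
        rw [Set.Finite.mem_toFinset]
        exact ⟨⟨hplm, fun a ha => hML0 a (mem_pickT ha)⟩, hp0⟩
      have hqS : pickF σ M ∈ hSy.toFinset := by
        rw [Set.Finite.mem_toFinset]
        exact ⟨⟨hqln, fun a ha => hML0 a (mem_pickF ha)⟩, hq0⟩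
      have hpc : pickT σ M ≤ c := hcmax _ hpS
      have hqd : pickF σ M ≤ d := hdmax _ hqS
      have hσct : σ.count true = m := by omega
      have hσcf : σ.count false = n := by omega
      have hσMS : σ ∈ MS := by
        rw [hMS, Finset.mem_filter]; exact ⟨hσ, hσct⟩
      have hrec : itl σ (pickT σ M) (pickF σ M) = M := itl_pick hσM
      have hmono : itl σ (pickT σ M) (pickF σ M) ≤ itl σ c d :=
        SVaux2.itl_le_itl σ _ c _ d (by omega) (by rw [hσct, hcl]) (by omega)
          (by rw [hσcf, hdl]) hpc hqd
      have hmax2 : itl σ c d ≤ M := by rw [hM]; exact hσsmax σ hσMS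
      have heq2 : itl σ (pickT σ M) (pickF σ M) = itl σ c d :=
        le_antisymm hmono (by rw [hrec]; exact hmax2)
      have e1 : pickT σ (itl σ (pickT σ M) (pickF σ M)) = pickT σ M :=
        pickT_itl (by omega) (by omega)
      have e2 : pickT σ (itl σ c d) = c :=
        pickT_itl (by rw [hσct, hcl]) (by rw [hσcf, hdl])
      have f1 : pickF σ (itl σ (pickT σ M) (pickF σ M)) = pickF σ M :=
        pickF_itl (by omega) (by omega)
      have f2 : pickF σ (itl σ c d) = d :=
        pickF_itl (by rw [hσct, hcl]) (by rw [hσcf, hdl])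
      rw [heq2] at e1 f1
      exact hcase ⟨by rw [← e1, e2], by rw [← f1, f2]⟩
  rw [Finset.sum_congr rfl heval, ← Finset.sum_filter, Finset.sum_const] at hkill
  have hσsT : pickT σs M = c := by
    rw [hM]; exact pickT_itl (by rw [hσs2, hcl]) (by rw [hσsf, hdl])
  have hσsF : pickF σs M = d := by
    rw [hM]; exact pickF_itl (by rw [hσs2, hcl]) (by rw [hσsf, hdl])
  have hcard : 0 <
      ((masks (m + n)).filter (fun σ => pickT σ M = c ∧ pickF σ M = d)).card :=
    Finset.card_pos.2 ⟨σs, Finset.mem_filter.2 ⟨hσs1, hσsT, hσsF⟩⟩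
  rw [nsmul_eq_mul] at hkill
  exact mul_ne_zero (Nat.cast_ne_zero.2 (by omega)) (mul_ne_zero hcx hdy) hkill

end SVaux4

open SVaux SVaux3 SVaux4

/-- There is a well-defined function `v` on the fraction field of `R` with
`v (x / y) = ι y - ι x` for nonzero `x, y ∈ R`, and `v` is an additive valuation:
`v (f * g) = v f + v g` and `v (f + g) ≥ min (v f) (v g)` on nonzero elements.
Moreover, `v` vanishes on the nonzero elements of any subfield of `R` annihilated by
every derivation in `u`. -/
theorem socle_valuation {R : Type*} [CommRing R] [IsDomain R] [CharZero R]
    (u : Set (R → R)) (hu : ∀ D ∈ u, IsDerivation D)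
    (hexh : ∀ x : R, ∃ i : ℕ, x ∈ SocleGNat u i) :
    ∃ v : FractionRing R → ℤ,
      (∀ x y : R, x ≠ 0 → y ≠ 0 →
        v (algebraMap R (FractionRing R) x / algebraMap R (FractionRing R) y) =
          (iota u y : ℤ) - iota u x) ∧
      (∀ f g : FractionRing R, f ≠ 0 → g ≠ 0 → v (f * g) = v f + v g) ∧
      (∀ f g : FractionRing R, f ≠ 0 → g ≠ 0 → f + g ≠ 0 →
        min (v f) (v g) ≤ v (f + g)) ∧
      (∀ k : Subring R, (∀ x ∈ k, x ≠ 0 → ∃ y ∈ k, x * y = 1) →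
        (∀ D ∈ u, ∀ c ∈ k, D c = 0) →
        ∀ c ∈ k, c ≠ 0 → v (algebraMap R (FractionRing R) c) = 0) := by
  classical
  set K := FractionRing R
  set φ := algebraMap R K with hφ
  have hφinj : Function.Injective φ := IsFractionRing.injective R K
  have hφ0 : ∀ {a : R}, φ a = 0 ↔ a = 0 := fun {a} => IsFractionRing.to_map_eq_zero_iff
  set sec : K → R × (nonZeroDivisors R) := fun f => IsLocalization.sec (nonZeroDivisors R) f
    with hsec
  set v : K → ℤ := fun f => (iota u ((sec f).2 : R) : ℤ) - (iota u (sec f).1 : ℤ) with hv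
  -- basic facts about sec
  have hspec : ∀ f : K, f * φ ((sec f).2 : R) = φ (sec f).1 := fun f =>
    IsLocalization.sec_spec (nonZeroDivisors R) f
  have hden : ∀ f : K, ((sec f).2 : R) ≠ 0 := fun f =>
    nonZeroDivisors.ne_zero (sec f).2.2
  have hnum : ∀ f : K, f ≠ 0 → (sec f).1 ≠ 0 := by
    intro f hf h0
    apply hf
    have := hspec f
    rw [h0, map_zero] at this
    rcases mul_eq_zero.1 this with h | h
    · exact h
    · exact absurd (hφ0.1 h) (hden f)
  -- well-definedness
  have key : ∀ (f : K) (x y : R), x ≠ 0 → y ≠ 0 → f * φ y = φ x →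
      v f = (iota u y : ℤ) - iota u x := by
    intro f x y hx hy hf
    have hy₂ := hden f
    have hf0 : f ≠ 0 := by
      intro h
      rw [h, zero_mul] at hf
      exact hx (hφ0.1 hf.symm)
    have hx₂ := hnum f hf0
    have hcross : x * ((sec f).2 : R) = (sec f).1 * y := by
      apply hφinj
      rw [map_mul, map_mul, ← hf, ← hspec f]
      ring
    have h1 : iota u x + iota u ((sec f).2 : R) = iota u (sec f).1 + iota u y := by
      rw [← iota_mul hu hexh hx hy₂, ← iota_mul hu hexh hx₂ hy, hcross]
    simp only [hv]
    omega
  refine ⟨v, ?_, ?_, ?_, ?_⟩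
  · intro x y hx hy
    apply key _ x y hx hy
    exact div_mul_cancel₀ _ (fun h => hy (hφ0.1 h))
  · intro f g hf hg
    have h1 := hspec f
    have h2 := hspec g
    have hvf := key f _ _ (hnum f hf) (hden f) h1
    have hvg := key g _ _ (hnum g hg) (hden g) h2
    have hmul : (f * g) * φ (((sec f).2 : R) * ((sec g).2 : R)) =
        φ ((sec f).1 * (sec g).1) := by
      rw [map_mul, map_mul, ← h1, ← h2]; ring
    have hvfg := key (f * g) _ _ (mul_ne_zero (hnum f hf) (hnum g hg))
      (mul_ne_zero (hden f) (hden g)) hmul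
    rw [hvfg, hvf, hvg, iota_mul hu hexh (hnum f hf) (hnum g hg),
      iota_mul hu hexh (hden f) (hden g)]
    push_cast
    ring
  · intro f g hf hg hfg
    have h1 := hspec f
    have h2 := hspec g
    have hvf := key f _ _ (hnum f hf) (hden f) h1
    have hvg := key g _ _ (hnum g hg) (hden g) h2
    have hadd : (f + g) * φ (((sec f).2 : R) * ((sec g).2 : R)) =
        φ ((sec f).1 * ((sec g).2 : R) + (sec g).1 * ((sec f).2 : R)) := by
      rw [map_mul, map_add, map_mul, map_mul, ← h1, ← h2]; ring
    have hz : (sec f).1 * ((sec g).2 : R) + (sec g).1 * ((sec f).2 : R) ≠ 0 := by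
      intro h0
      apply hfg
      rw [h0, map_zero] at hadd
      rcases mul_eq_zero.1 hadd with h | h
      · exact h
      · exact absurd (hφ0.1 h) (mul_ne_zero (hden f) (hden g))
    have hvfg := key (f + g) _ _ hz (mul_ne_zero (hden f) (hden g)) hadd
    have hmax : iota u ((sec f).1 * ((sec g).2 : R) + (sec g).1 * ((sec f).2 : R)) ≤
        max (iota u ((sec f).1 * ((sec g).2 : R)))
          (iota u ((sec g).1 * ((sec f).2 : R))) := iota_add_le hu hexh _ _
    rw [iota_mul hu hexh (hnum f hf) (hden g),
      iota_mul hu hexh (hnum g hg) (hden f)] at hmax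
    rw [hvfg, hvf, hvg, iota_mul hu hexh (hden f) (hden g)]
    omega
  · intro k _ hann c hck hc
    have hc0 : c ∈ SocleGNat u 0 := by
      intro Ds hDs hlen
      obtain ⟨D, rfl⟩ := List.length_eq_one_iff.1 hlen
      show iterApp [] (D c) = 0
      exact hann D (hDs D (by simp)) c hck
    have h10 : (1 : R) ∈ SocleGNat u 0 := by
      intro Ds hDs hlen
      obtain ⟨D, rfl⟩ := List.length_eq_one_iff.1 hlen
      show iterApp [] (D 1) = 0
      have := (hu D (hDs D (by simp))).2 1 1
      simp only [mul_one, one_mul] at this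
      exact (left_eq_add.1 this)
    have hic : iota u c = 0 := Nat.le_zero.1 (iota_le hc0)
    have hi1 : iota u (1 : R) = 0 := Nat.le_zero.1 (iota_le h10)
    have := key (φ c) c 1 hc one_ne_zero (by rw [map_one, mul_one])
    rw [this, hic, hi1]
    simp
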